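/- Fix positive integers b, c and integers a_1 <= 0 < a_2. The coefficients e(p,q) defined by the quantum greedy recurrence satisfy e(p,0) = [a_2 choose p]_{v^b} for all p >= 0 and e(p,q) = 0 for all q > 0. -/

import Mathlib

open Finset

noncomputable section

/-- Field of rational functions over ℚ, containing `ℤ[w^{±1}]`. -/
abbrev KK : Type := RatFunc ℚ

/-- The indeterminate `w`. -/
def wvar : KK := RatFunc.X

/-- The bar-invariant quantum integer `[n]_u = (u^n - u^{-n})/(u - u⁻¹)`. -/
def qint (u : KK) (n : ℤ) : KK := (u ^ n - u ^ (-n)) / (u - u⁻¹)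

/-- The bar-invariant quantum binomial coefficient. -/
def qbinom (u : KK) (n : ℤ) (k : ℕ) : KK :=
  (∏ i ∈ Finset.range k, qint u (n - i)) / (∏ i ∈ Finset.range k, qint u ((i : ℤ) + 1))
lemma qint_zero (u : KK) : qint u 0 = 0 := by simp [qint]

lemma qint_neg (u : KK) (n : ℤ) : qint u (-n) = -qint u n := by
  rw [qint, qint, neg_neg, ← neg_sub, neg_div]

lemma wvar_pow_ne_one {d : ℕ} (hd : 0 < d) : (wvar : KK) ^ d ≠ 1 := by
  intro h
  have h2 : (algebraMap (Polynomial ℚ) (RatFunc ℚ)) (Polynomial.X ^ d) =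
      (algebraMap (Polynomial ℚ) (RatFunc ℚ)) 1 := by
    simpa [map_pow, RatFunc.algebraMap_X, wvar] using h
  have h3 : (Polynomial.X : Polynomial ℚ) ^ d = 1 := RatFunc.algebraMap_injective ℚ h2
  have := congrArg Polynomial.natDegree h3
  simp [Polynomial.natDegree_X_pow] at this
  omega

lemma qint_ne_zero {b : ℕ} (hb : 0 < b) {n : ℤ} (hn : n ≠ 0) :
    qint (wvar ^ b) n ≠ 0 := by
  set u : KK := wvar ^ b with hudef
  have hu : u ≠ 0 := pow_ne_zero b RatFunc.X_ne_zero
  have key : ∀ m : ℤ, 0 < m → u ^ m ≠ 1 := by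
    intro m hm h
    have : u ^ m = u ^ (m.toNat) := by rw [← zpow_natCast, Int.toNat_of_nonneg hm.le]
    rw [this, hudef, ← pow_mul] at h
    have hpos : 0 < b * m.toNat := Nat.mul_pos hb (by omega)
    exact wvar_pow_ne_one hpos h
  have hnum : ∀ m : ℤ, 0 < m → u ^ m - u ^ (-m) ≠ 0 := by
    intro m hm h
    have h1 : u ^ m = u ^ (-m) := sub_eq_zero.mp h
    have h2 : u ^ (2 * m) = 1 := by
      rw [two_mul, zpow_add₀ hu]
      nth_rewrite 1 [h1]
      rw [← zpow_add₀ hu, neg_add_cancel, zpow_zero]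
    exact key (2 * m) (by omega) h2
  have hden : u - u⁻¹ ≠ 0 := by
    intro h
    have h1 : u = u⁻¹ := sub_eq_zero.mp h
    have h2 : u ^ (2 : ℤ) = 1 := by
      have := congrArg (· * u) h1
      simp [inv_mul_cancel₀ hu] at this
      rw [show (2:ℤ) = 1 + 1 by norm_num, zpow_add₀ hu]
      simpa using this
    exact key 2 (by norm_num) h2
  rw [qint]
  rcases lt_or_gt_of_ne hn with h | h
  · have := hnum (-n) (by omega)
    rw [neg_neg] at this
    exact div_ne_zero (fun hz => this (by rw [← neg_sub, hz, neg_zero])) hden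
  · exact div_ne_zero (hnum n h) hden

lemma qint_split (u : KK) (hu : u ≠ 0) (n m : ℤ) :
    qint u n = u ^ m * qint u (n - m) + u ^ (m - n) * qint u m := by
  rw [qint, qint, qint, mul_div_assoc', mul_div_assoc', ← add_div]
  congr 1
  rw [neg_sub, mul_sub, mul_sub, ← zpow_add₀ hu, ← zpow_add₀ hu, ← zpow_add₀ hu, ← zpow_add₀ hu]
  rw [show m + (n - m) = n by ring, show m - n + m = -(n - 2*m) by ring,
    show m + (m - n) = -(n - 2*m) by ring, show m - n + -m = -n by ring]
  ring

def qnum (u : KK) (n : ℤ) (k : ℕ) : KK := ∏ i ∈ Finset.range k, qint u (n - i)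
def qden (u : KK) (k : ℕ) : KK := ∏ i ∈ Finset.range k, qint u ((i : ℤ) + 1)

lemma qbinom_eq (u : KK) (n : ℤ) (k : ℕ) : qbinom u n k = qnum u n k / qden u k := rfl

lemma qbinom_zero (u : KK) (n : ℤ) : qbinom u n 0 = 1 := by simp [qbinom]

lemma qnum_succ_left (u : KK) (n : ℤ) (k : ℕ) :
    qnum u n (k+1) = qint u n * qnum u (n-1) k := by
  rw [qnum, Finset.prod_range_succ', mul_comm]
  congr 1
  · push_cast; rw [sub_zero]
  · apply Finset.prod_congr rfl
    intro i _
    congr 1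
    push_cast; ring

lemma qnum_succ_right (u : KK) (n : ℤ) (k : ℕ) :
    qnum u n (k+1) = qnum u n k * qint u (n - k) := Finset.prod_range_succ _ _

lemma qden_succ (u : KK) (k : ℕ) :
    qden u (k+1) = qden u k * qint u ((k:ℤ)+1) := Finset.prod_range_succ _ _

lemma qden_ne_zero {u : KK} (hq : ∀ j : ℤ, j ≠ 0 → qint u j ≠ 0) (k : ℕ) :
    qden u k ≠ 0 := by
  rw [qden]
  apply Finset.prod_ne_zero_iff.mpr
  intro i _
  exact hq _ (by omega)

lemma pascalA {u : KK} (hu : u ≠ 0) (hq : ∀ j : ℤ, j ≠ 0 → qint u j ≠ 0)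
    (n : ℤ) (k : ℕ) :
    qbinom u n (k+1) =
      u ^ ((k:ℤ)+1-n) * qbinom u (n-1) k + u ^ ((k:ℤ)+1) * qbinom u (n-1) (k+1) := by
  have hDk : qden u k ≠ 0 := qden_ne_zero hq k
  have hK : qint u ((k:ℤ)+1) ≠ 0 := hq _ (by omega)
  rw [qbinom_eq, qbinom_eq, qbinom_eq, qnum_succ_left, qnum_succ_right, qden_succ,
    qint_split u hu n ((k:ℤ)+1), show n - ((k:ℤ)+1) = n - 1 - k by ring]
  field_simp
  ring

lemma pascalB {u : KK} (hu : u ≠ 0) (hq : ∀ j : ℤ, j ≠ 0 → qint u j ≠ 0)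
    (n : ℤ) (k : ℕ) :
    qbinom u n (k+1) =
      u ^ (n-((k:ℤ)+1)) * qbinom u (n-1) k + u ^ (-((k:ℤ)+1)) * qbinom u (n-1) (k+1) := by
  have hDk : qden u k ≠ 0 := qden_ne_zero hq k
  have hK : qint u ((k:ℤ)+1) ≠ 0 := hq _ (by omega)
  rw [qbinom_eq, qbinom_eq, qbinom_eq, qnum_succ_left, qnum_succ_right, qden_succ,
    qint_split u hu n (n - ((k:ℤ)+1)), show n - (n - ((k:ℤ)+1)) = (k:ℤ)+1 by ring,
    show n - ((k:ℤ)+1) - n = -((k:ℤ)+1) by ring, show n - ((k:ℤ)+1) = n - 1 - k by ring]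
  field_simp

lemma qbinom_neg_top (u : KK) (n : ℤ) (k : ℕ) :
    qbinom u (-n) k = (-1)^k * qbinom u (n + k - 1) k := by
  rw [qbinom_eq, qbinom_eq]
  have h1 : qnum u (-n) k = ∏ i ∈ Finset.range k, ((-1 : KK) * qint u (n + i)) := by
    apply Finset.prod_congr rfl
    intro i _
    rw [show -n - (i:ℤ) = -(n + i) by ring, qint_neg]; ring
  have h2 : qnum u (n + k - 1) k = ∏ i ∈ Finset.range k, qint u (n + i) := by
    rw [qnum, ← Finset.prod_range_reflect (fun j => qint u (n + j)) k]
    apply Finset.prod_congr rfl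
    intro i hi
    simp only [Finset.mem_range] at hi
    congr 1
    omega
  rw [h1, h2, Finset.prod_mul_distrib, Finset.prod_const, Finset.card_range, mul_div_assoc]

lemma qbinom_top_zero (u : KK) {k : ℕ} (hk : 1 ≤ k) : qbinom u 0 k = 0 := by
  rw [qbinom_eq, qnum]
  rw [Finset.prod_eq_zero (Finset.mem_range.mpr (show 0 < k by omega))
    (by simp [qint_zero] : qint u ((0:ℤ) - (0:ℕ)) = 0)]
  exact zero_div _

def Sfun (u : KK) (m : ℤ) (p : ℕ) : KK :=
  ∑ k ∈ Finset.range (p+1), qbinom u m (p - k) * qbinom u (-m) k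

lemma Sfun_zero (u : KK) {p : ℕ} (hp : 1 ≤ p) : Sfun u 0 p = 0 := by
  rw [Sfun]
  apply Finset.sum_eq_zero
  intro k hk
  rcases Nat.eq_zero_or_pos k with h | h
  · subst h
    rw [Nat.sub_zero, qbinom_top_zero u hp, zero_mul]
  · rw [neg_zero, qbinom_top_zero u h, mul_zero]

lemma Sfun_step {u : KK} (hu : u ≠ 0) (hq : ∀ j : ℤ, j ≠ 0 → qint u j ≠ 0)
    (m : ℤ) (q : ℕ) :
    Sfun u (m+1) (q+1) = u ^ ((q:ℤ)+1) * Sfun u m (q+1) := by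
  set g : ℕ → KK := fun k =>
    u ^ ((q:ℤ) - k - m) * (qbinom u m (q - k) * qbinom u (-m-1) k) with hg
  set f : ℕ → KK := fun k =>
    u ^ ((q:ℤ) + 1 - k) * (qbinom u m (q + 1 - k) * qbinom u (-m-1) k) with hf
  have hL : Sfun u (m+1) (q+1) =
      (∑ k ∈ Finset.range (q+1), (g k + f k)) + f (q+1) := by
    rw [Sfun, Finset.sum_range_succ]
    congr 1
    · apply Finset.sum_congr rfl
      intro k hk
      simp only [Finset.mem_range] at hk
      have hk' : k ≤ q := by omega
      rw [show q + 1 - k = (q - k) + 1 from by omega, pascalA hu hq (m+1) (q-k)]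
      simp only [hg, hf]
      rw [show ((q - k : ℕ) : ℤ) = (q:ℤ) - k from by omega,
        show -(m+1) = -m-1 by ring, show m + 1 - 1 = m by ring,
        show (q:ℤ) - k + 1 - (m+1) = (q:ℤ) - k - m by ring,
        show (q:ℤ) - k + 1 = (q:ℤ) + 1 - k by ring,
        show (q - k) + 1 = q + 1 - k from by omega]
      ring
    · simp only [hf, Nat.sub_self, qbinom_zero, one_mul, Nat.cast_add, Nat.cast_one]
      rw [show (q:ℤ) + 1 - ((q:ℤ)+1) = 0 by ring, zpow_zero, one_mul,
        show -(m+1) = -m-1 by ring]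
  have hR : u ^ ((q:ℤ)+1) * Sfun u m (q+1) =
      (∑ k ∈ Finset.range (q+1), (g k + f (k+1))) + f 0 := by
    rw [Sfun, Finset.mul_sum, Finset.sum_range_succ']
    congr 1
    · apply Finset.sum_congr rfl
      intro k hk
      simp only [Finset.mem_range] at hk
      rw [show q + 1 - (k+1) = q - k from by omega, pascalB hu hq (-m) k]
      simp only [hg, hf]
      rw [show q + 1 - (k+1) = q - k from by omega,
        show ((k+1:ℕ):ℤ) = (k:ℤ)+1 from by push_cast; ring]
      rw [show (q:ℤ) - ↑k - m = ((q:ℤ)+1) + (-m - ((k:ℤ)+1)) by ring,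
        show (q:ℤ) + 1 - ((k:ℤ)+1) = ((q:ℤ)+1) + (-((k:ℤ)+1)) by ring,
        zpow_add₀ hu ((q:ℤ)+1) (-m - ((k:ℤ)+1)), zpow_add₀ hu ((q:ℤ)+1) (-((k:ℤ)+1))]
      ring
  rw [hL, hR, Finset.sum_add_distrib, Finset.sum_add_distrib]
  have h1 := Finset.sum_range_succ f (q+1)
  have h2 := Finset.sum_range_succ' f (q+1)
  linear_combination h2 - h1

lemma Sfun_eq_zero {u : KK} (hu : u ≠ 0) (hq : ∀ j : ℤ, j ≠ 0 → qint u j ≠ 0)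
    {m : ℤ} (hm : 0 ≤ m) {p : ℕ} (hp : 1 ≤ p) : Sfun u m p = 0 := by
  obtain ⟨d, rfl⟩ : ∃ d : ℕ, m = (d:ℤ) := ⟨m.toNat, (Int.toNat_of_nonneg hm).symm⟩
  clear hm
  induction d with
  | zero => simpa using Sfun_zero u hp
  | succ d ihd =>
    obtain ⟨q, rfl⟩ : ∃ q, p = q + 1 := ⟨p - 1, by omega⟩
    rw [show ((d+1:ℕ):ℤ) = (d:ℤ)+1 from by push_cast; ring, Sfun_step hu hq d q,
      ihd, mul_zero]

/-- If `a_1 ≤ 0 < a_2`, the quantum greedy coefficients satisfy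
`e(p,0) = [a_2 choose p]_{v^b}` and `e(p,q) = 0` for `q > 0`. -/
theorem greedy_case2 (b c : ℕ) (hb : 0 < b) (hc : 0 < c) (a1 a2 : ℤ)
    (ha1 : a1 ≤ 0) (ha2 : 0 < a2)
    (e : ℕ → ℕ → KK) (h00 : e 0 0 = 1)
    (hrec1 : ∀ p q : ℕ, (p, q) ≠ (0, 0) → (c : ℤ) * a1 * q ≤ (b : ℤ) * a2 * p →
      e p q = ∑ k ∈ Finset.Icc 1 p, (-1 : KK) ^ (k - 1) * e (p - k) q *
        qbinom (wvar ^ b) (max (a2 - c * q) 0 + (k : ℤ) - 1) k)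
    (hrec2 : ∀ p q : ℕ, (p, q) ≠ (0, 0) → (b : ℤ) * a2 * p ≤ (c : ℤ) * a1 * q →
      e p q = ∑ l ∈ Finset.Icc 1 q, (-1 : KK) ^ (l - 1) * e p (q - l) *
        qbinom (wvar ^ c) (max (a1 - b * p) 0 + (l : ℤ) - 1) l) :
    (∀ p : ℕ, e p 0 = qbinom (wvar ^ b) a2 p) ∧
    (∀ p q : ℕ, 0 < q → e p q = 0) := by
  set u : KK := wvar ^ b with hudef
  have hu : u ≠ 0 := pow_ne_zero b RatFunc.X_ne_zero
  have hq : ∀ j : ℤ, j ≠ 0 → qint u j ≠ 0 := fun j hj => qint_ne_zero hb hj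
  constructor
  · intro p
    induction p using Nat.strong_induction_on with
    | _ p ih =>
      rcases Nat.eq_zero_or_pos p with hp | hp
      · subst hp; rw [h00, qbinom_zero]
      · have hne : (p, (0:ℕ)) ≠ (0, 0) := by
          intro h
          rw [Prod.mk.injEq] at h
          obtain ⟨h1, h2⟩ := h
          omega
        have hcond : (c : ℤ) * a1 * (0:ℕ) ≤ (b : ℤ) * a2 * p := by
          rw [Nat.cast_zero, mul_zero]
          positivity
        rw [hrec1 p 0 hne hcond]
        have hmax : max (a2 - (c:ℤ) * ((0:ℕ):ℤ)) 0 = a2 := by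
          rw [Nat.cast_zero, mul_zero, sub_zero]
          exact max_eq_left ha2.le
        have hterm : ∀ k ∈ Finset.Icc 1 p,
            (-1 : KK) ^ (k - 1) * e (p - k) 0 *
              qbinom u (max (a2 - (c:ℤ) * ((0:ℕ):ℤ)) 0 + (k : ℤ) - 1) k
            = -(qbinom u a2 (p - k) * qbinom u (-a2) k) := by
          intro k hk
          simp only [Finset.mem_Icc] at hk
          rw [hmax, ih (p - k) (by omega),
            show a2 + (k:ℤ) - 1 = a2 + k - 1 by ring]
          have hrefl : qbinom u (-a2) k = (-1)^k * qbinom u (a2 + k - 1) k :=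
            qbinom_neg_top u a2 k
          have hsq : ((-1 : KK))^k * ((-1 : KK))^k = 1 := by
            rw [← pow_add, ← two_mul, pow_mul]; norm_num
          have : qbinom u (a2 + k - 1) k = (-1)^k * qbinom u (-a2) k := by
            rw [hrefl, ← mul_assoc, hsq, one_mul]
          rw [this]
          have hkk : ((-1 : KK))^(k-1) * ((-1 : KK))^k = -1 := by
            rw [show k = (k - 1) + 1 from by omega, pow_succ, ← mul_assoc,
              show k - 1 + 1 - 1 = k - 1 from by omega, ← pow_add, ← two_mul, pow_mul]
            norm_num
          linear_combination (qbinom u a2 (p - k) * qbinom u (-a2) k) * hkk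
        rw [Finset.sum_congr rfl hterm]
        have hS : Sfun u a2 p = 0 := Sfun_eq_zero hu hq ha2.le hp
        rw [Sfun, Finset.sum_range_succ'] at hS
        have hIcc : ∑ k ∈ Finset.Icc 1 p, -(qbinom u a2 (p - k) * qbinom u (-a2) k)
            = ∑ k ∈ Finset.range p, -(qbinom u a2 (p - (k+1)) * qbinom u (-a2) (k+1)) := by
          rw [← Finset.Ico_add_one_right_eq_Icc, Finset.sum_Ico_eq_sum_range]
          apply Finset.sum_congr (by congr 1)
          intro k _
          rw [add_comm 1 k]
        rw [hIcc, Finset.sum_neg_distrib]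
        have h0 : qbinom u a2 (p - 0) * qbinom u (-a2) 0 = qbinom u a2 p := by
          rw [Nat.sub_zero, qbinom_zero, mul_one]
        rw [h0] at hS
        linear_combination -hS
  · intro p
    induction p using Nat.strong_induction_on with
    | _ p ih =>
      intro q hq0
      have hne : (p, q) ≠ (0, 0) := by
        intro h
        rw [Prod.mk.injEq] at h
        obtain ⟨h1, h2⟩ := h
        omega
      have hcond : (c : ℤ) * a1 * q ≤ (b : ℤ) * a2 * p := by
        have h1 : (c : ℤ) * a1 * q ≤ 0 :=
          mul_nonpos_of_nonpos_of_nonneg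
            (mul_nonpos_of_nonneg_of_nonpos (by positivity) ha1) (by positivity)
        have h2 : (0:ℤ) ≤ (b : ℤ) * a2 * p := by positivity
        omega
      rw [hrec1 p q hne hcond]
      apply Finset.sum_eq_zero
      intro k hk
      simp only [Finset.mem_Icc] at hk
      rw [ih (p - k) (by omega) q hq0, mul_zero, zero_mul]


end
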